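/- Not every connected graph is a BDM graph: there exist two non-isomorphic connected simple graphs G₁ and G₂ on the same vertex set of cardinality 7, both of diameter 3, such that ∂(G₁) = ∂(G₂), |∂(G₁)| = 6, and d_{G₁}(x,y) = d_{G₂}(x,y) for all x, y ∈ ∂(G₁). -/

import Mathlib

open SimpleGraph

def gBoundary {V : Type*} (G : SimpleGraph V) : Set V :=
  {v | ∃ u, ∀ w, G.Adj v w → G.dist u w ≤ G.dist u v}

noncomputable def gEcc {V : Type*} [Fintype V] (G : SimpleGraph V) (v : V) : ℕ :=
  Finset.univ.sup fun w => G.dist v w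

noncomputable def gDiam {V : Type*} [Fintype V] (G : SimpleGraph V) : ℕ :=
  Finset.univ.sup fun v => gEcc G v

noncomputable def gRad {V : Type*} [Fintype V] (G : SimpleGraph V) : ℕ :=
  sInf (Set.range fun v => gEcc G v)

def IsBDM {V : Type*} (G : SimpleGraph V) : Prop :=
  ∀ G' : SimpleGraph V, G'.Connected → gBoundary G' = gBoundary G →
    (∀ x ∈ gBoundary G, ∀ y ∈ gBoundary G, G'.dist x y = G.dist x y) →
    Nonempty (G ≃g G')

def IsCutVertex {V : Type*} (G : SimpleGraph V) (v : V) : Prop :=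
  ¬ (G.induce {u | u ≠ v}).Connected

def Chordal {V : Type*} (G : SimpleGraph V) : Prop :=
  ∀ n, 4 ≤ n → IsEmpty (cycleGraph n ↪g G)

def DistHereditary {V : Type*} (G : SimpleGraph V) : Prop :=
  ∀ s : Set V, (G.induce s).Connected →
    ∀ u v : s, (G.induce s).dist u v = G.dist u v

def Ptolemaic {V : Type*} (G : SimpleGraph V) : Prop :=
  Chordal G ∧ DistHereditary G

def IsIntervalGraph {V : Type*} (G : SimpleGraph V) : Prop :=
  ∃ a b : V → ℝ, (∀ v, a v ≤ b v) ∧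
    ∀ u v : V, u ≠ v →
      (G.Adj u v ↔ (Set.Icc (a u) (b u) ∩ Set.Icc (a v) (b v)).Nonempty)

def IsBipartiteGraph {V : Type*} (G : SimpleGraph V) : Prop :=
  ∃ s : Set V, ∀ a b : V, G.Adj a b → ((a ∈ s ∧ b ∉ s) ∨ (a ∉ s ∧ b ∈ s))

def IsSplitGraph {V : Type*} (G : SimpleGraph V) : Prop :=
  ∃ K : Set V, (∀ a ∈ K, ∀ b ∈ K, a ≠ b → G.Adj a b) ∧
    (∀ a ∉ K, ∀ b ∉ K, ¬ G.Adj a b)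

def IsFanCenter {V : Type*} (G : SimpleGraph V) (u : V) : Prop :=
  ∃ x : Fin 4 → V, Function.Injective x ∧ (∀ i, x i ≠ u) ∧
    (∀ i, G.Adj u (x i)) ∧
    (∀ i j : Fin 4, G.Adj (x i) (x j) ↔ (i.val + 1 = j.val ∨ j.val + 1 = i.val))


/- ## Auxiliary constructions for the proof -/

private def e1' : List (Fin 7 × Fin 7) :=
  [(0,4),(0,5),(0,6),(1,3),(1,5),(1,6),(2,3),(2,4),(2,6),(3,6)]

private def e2' : List (Fin 7 × Fin 7) :=
  [(0,4),(0,5),(0,6),(1,3),(1,5),(2,3),(2,4),(2,6),(3,6),(4,6)]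

private def adjOf (E : List (Fin 7 × Fin 7)) (u v : Fin 7) : Bool :=
  E.any fun p => (p.1 == u && p.2 == v) || (p.1 == v && p.2 == u)

private def Gr1 : SimpleGraph (Fin 7) :=
  ⟨fun u v => adjOf e1' u v = true,
    ⟨fun u v h => (by decide : ∀ u v : Fin 7, adjOf e1' u v = true → adjOf e1' v u = true) u v h⟩,
    ⟨fun v => by revert v; decide⟩⟩

private def Gr2 : SimpleGraph (Fin 7) :=
  ⟨fun u v => adjOf e2' u v = true,
    ⟨fun u v h => (by decide : ∀ u v : Fin 7, adjOf e2' u v = true → adjOf e2' v u = true) u v h⟩,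
    ⟨fun v => by revert v; decide⟩⟩

private instance : DecidableRel Gr1.Adj :=
  fun u v => inferInstanceAs (Decidable (adjOf e1' u v = true))

private instance : DecidableRel Gr2.Adj :=
  fun u v => inferInstanceAs (Decidable (adjOf e2' u v = true))

private def Dm1 : Fin 7 → Fin 7 → ℕ := fun u v =>
  (([[0,2,2,2,1,1,1],
     [2,0,2,1,3,1,1],
     [2,2,0,1,1,3,1],
     [2,1,1,0,2,2,1],
     [1,3,1,2,0,2,2],
     [1,1,3,2,2,0,2],
     [1,1,1,1,2,2,0]] : List (List ℕ)).getD u.val []).getD v.val 0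

private def Dm2 : Fin 7 → Fin 7 → ℕ := fun u v =>
  (([[0,2,2,2,1,1,1],
     [2,0,2,1,3,1,2],
     [2,2,0,1,1,3,1],
     [2,1,1,0,2,2,1],
     [1,3,1,2,0,2,1],
     [1,1,3,2,2,0,2],
     [1,2,1,1,1,2,0]] : List (List ℕ)).getD u.val []).getD v.val 0

private theorem exists_walk_of_certified {V : Type*} {G : SimpleGraph V} {D : V → V → ℕ}
    (h0 : ∀ u v, D u v = 0 → u = v)
    (hstep : ∀ u v, D u v ≠ 0 → ∃ w, G.Adj u w ∧ D w v + 1 = D u v) :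
    ∀ (n : ℕ) (u v : V), D u v = n → ∃ p : G.Walk u v, p.length = n := by
  intro n
  induction n with
  | zero =>
    intro u v h
    obtain rfl := h0 u v h
    exact ⟨SimpleGraph.Walk.nil, rfl⟩
  | succ n ih =>
    intro u v h
    obtain ⟨w, hadj, hw⟩ := hstep u v (by omega)
    obtain ⟨p, hp⟩ := ih w v (by omega)
    exact ⟨SimpleGraph.Walk.cons hadj p, by simp [hp]⟩

private theorem le_walk_length_of_certified {V : Type*} {G : SimpleGraph V} {D : V → V → ℕ}
    (h0 : ∀ v, D v v = 0)
    (htri : ∀ u w, G.Adj u w → ∀ v, D u v ≤ D w v + 1) :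
    ∀ {u v : V} (p : G.Walk u v), D u v ≤ p.length := by
  intro u v p
  induction p with
  | nil => simp [h0]
  | cons hadj q ih =>
    rename_i a b c
    calc D a c ≤ D b c + 1 := htri a b hadj c
    _ ≤ q.length + 1 := by omega
    _ = (SimpleGraph.Walk.cons hadj q).length := by simp

private theorem dist_eq_of_certified {V : Type*} {G : SimpleGraph V} {D : V → V → ℕ}
    (h0 : ∀ v, D v v = 0)
    (h0' : ∀ u v, D u v = 0 → u = v)
    (hstep : ∀ u v, D u v ≠ 0 → ∃ w, G.Adj u w ∧ D w v + 1 = D u v)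
    (htri : ∀ u w, G.Adj u w → ∀ v, D u v ≤ D w v + 1) :
    ∀ u v, G.dist u v = D u v := by
  intro u v
  obtain ⟨p, hp⟩ := exists_walk_of_certified h0' hstep (D u v) u v rfl
  refine le_antisymm (hp ▸ SimpleGraph.dist_le p) ?_
  obtain ⟨q, hq⟩ := SimpleGraph.Reachable.exists_walk_length_eq_dist ⟨p⟩
  exact hq ▸ le_walk_length_of_certified h0 htri q

private theorem connected_of_certified {V : Type*} [Nonempty V] {G : SimpleGraph V}
    {D : V → V → ℕ}
    (h0' : ∀ u v, D u v = 0 → u = v)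
    (hstep : ∀ u v, D u v ≠ 0 → ∃ w, G.Adj u w ∧ D w v + 1 = D u v) :
    G.Connected := by
  refine SimpleGraph.Connected.mk fun u v => ?_
  obtain ⟨p, _⟩ := exists_walk_of_certified h0' hstep (D u v) u v rfl
  exact ⟨p⟩

private theorem dist1 : ∀ u v, Gr1.dist u v = Dm1 u v :=
  dist_eq_of_certified (by decide) (by decide) (by decide) (by decide)

private theorem dist2 : ∀ u v, Gr2.dist u v = Dm2 u v :=
  dist_eq_of_certified (by decide) (by decide) (by decide) (by decide)

private def triCount (G : SimpleGraph (Fin 7)) [DecidableRel G.Adj] : ℕ :=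
  (Finset.univ.filter fun p : Fin 7 × Fin 7 × Fin 7 =>
    G.Adj p.1 p.2.1 ∧ G.Adj p.2.1 p.2.2 ∧ G.Adj p.1 p.2.2).card

private theorem triCount_eq {G G' : SimpleGraph (Fin 7)} [DecidableRel G.Adj]
    [DecidableRel G'.Adj] (f : G ≃g G') : triCount G = triCount G' := by
  refine Finset.card_equiv (Equiv.prodCongr f.toEquiv
    (Equiv.prodCongr f.toEquiv f.toEquiv)) ?_
  rintro ⟨a, b, c⟩
  simp [f.map_adj_iff]

private theorem bset1 : gBoundary Gr1 = ↑({0,1,2,3,4,5} : Finset (Fin 7)) := by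
  ext v
  simp only [gBoundary, Set.mem_setOf_eq, Finset.coe_insert, Set.mem_insert_iff,
    Finset.coe_singleton, Set.mem_singleton_iff]
  simp only [dist1]
  revert v; decide

private theorem bset2 : gBoundary Gr2 = ↑({0,1,2,3,4,5} : Finset (Fin 7)) := by
  ext v
  simp only [gBoundary, Set.mem_setOf_eq, Finset.coe_insert, Set.mem_insert_iff,
    Finset.coe_singleton, Set.mem_singleton_iff]
  simp only [dist2]
  revert v; decide

theorem exists_non_bdm_pair_order_seven :
    ∃ G₁ G₂ : SimpleGraph (Fin 7), G₁.Connected ∧ G₂.Connected ∧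
      ¬ Nonempty (G₁ ≃g G₂) ∧ gDiam G₁ = 3 ∧ gDiam G₂ = 3 ∧
      gBoundary G₁ = gBoundary G₂ ∧ (gBoundary G₁).ncard = 6 ∧
      ∀ x ∈ gBoundary G₁, ∀ y ∈ gBoundary G₁, G₁.dist x y = G₂.dist x y := by
  refine ⟨Gr1, Gr2, ?_, ?_, ?_, ?_, ?_, ?_, ?_, ?_⟩
  · exact connected_of_certified (D := Dm1) (by decide) (by decide)
  · exact connected_of_certified (D := Dm2) (by decide) (by decide)
  · rintro ⟨f⟩
    have h := triCount_eq f
    rw [show triCount Gr1 = 12 by decide, show triCount Gr2 = 18 by decide] at h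
    exact absurd h (by decide)
  · simp only [gDiam, gEcc, dist1]
    decide
  · simp only [gDiam, gEcc, dist2]
    decide
  · rw [bset1, bset2]
  · rw [bset1, Set.ncard_coe_finset]
    decide
  · intro x hx y hy
    rw [bset1, Finset.mem_coe] at hx hy
    rw [dist1, dist2]
    revert hx hy
    revert x y
    decide
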